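/- Let A and B be complex numbers such that \mathrm{Re}\{A e^{it} + B e^{3it}\} \leq 1 for every real t. Then |A| \leq 2/\sqrt{3}. -/

import Mathlib

open Complex

/-- If `Re (A e^{it} + B e^{3it}) ≤ 1` for every real `t`, then
`|A| ≤ 2/√3`. -/
theorem coeff_bound_of_trig_ineq (A B : ℂ)
    (hAB : ∀ t : ℝ,
      (A * Complex.exp (t * Complex.I) + B * Complex.exp (3 * t * Complex.I)).re ≤ 1) :
    ‖A‖ ≤ 2 / Real.sqrt 3 := by
  have key : ∀ s : ℝ, Real.sqrt 3 * (A * Complex.exp (s * Complex.I)).re ≤ 2 := by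
    intro s
    have h1 := hAB (s - Real.pi / 6)
    have h2 := hAB (s + Real.pi / 6)
    have e1 : (A * Complex.exp ((↑(s - Real.pi / 6) : ℂ) * Complex.I)
        + B * Complex.exp (3 * (↑(s - Real.pi / 6) : ℂ) * Complex.I)).re
        + (A * Complex.exp ((↑(s + Real.pi / 6) : ℂ) * Complex.I)
        + B * Complex.exp (3 * (↑(s + Real.pi / 6) : ℂ) * Complex.I)).re
        = Real.sqrt 3 * (A * Complex.exp (s * Complex.I)).re := by
      have h3 : ∀ x : ℝ, (3 : ℂ) * (x : ℂ) = ((3 * x : ℝ) : ℂ) := by intro x; push_cast; ring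
      rw [h3, h3]
      simp only [Complex.exp_mul_I, Complex.add_re, Complex.mul_re, Complex.add_im,
        Complex.mul_im, Complex.cos_ofReal_re, Complex.sin_ofReal_re,
        Complex.cos_ofReal_im, Complex.sin_ofReal_im, Complex.I_re, Complex.I_im]
      have c1 : Real.cos (s - Real.pi / 6) = Real.cos s * Real.cos (Real.pi / 6)
          + Real.sin s * Real.sin (Real.pi / 6) := Real.cos_sub s _
      have c2 : Real.cos (s + Real.pi / 6) = Real.cos s * Real.cos (Real.pi / 6)
          - Real.sin s * Real.sin (Real.pi / 6) := Real.cos_add s _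
      have s1 : Real.sin (s - Real.pi / 6) = Real.sin s * Real.cos (Real.pi / 6)
          - Real.cos s * Real.sin (Real.pi / 6) := Real.sin_sub s _
      have s2 : Real.sin (s + Real.pi / 6) = Real.sin s * Real.cos (Real.pi / 6)
          + Real.cos s * Real.sin (Real.pi / 6) := Real.sin_add s _
      have b1 : (3 : ℝ) * (s - Real.pi / 6) = 3 * s - Real.pi / 2 := by ring
      have b2 : (3 : ℝ) * (s + Real.pi / 6) = 3 * s + Real.pi / 2 := by ring
      have bc1 : Real.cos (3 * (s - Real.pi / 6)) = Real.sin (3 * s) := by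
        rw [b1, Real.cos_sub_pi_div_two]
      have bc2 : Real.cos (3 * (s + Real.pi / 6)) = - Real.sin (3 * s) := by
        rw [b2, Real.cos_add_pi_div_two]
      have bs1 : Real.sin (3 * (s - Real.pi / 6)) = - Real.cos (3 * s) := by
        rw [b1, Real.sin_sub_pi_div_two]
      have bs2 : Real.sin (3 * (s + Real.pi / 6)) = Real.cos (3 * s) := by
        rw [b2, Real.sin_add_pi_div_two]
      rw [c1, c2, s1, s2, bc1, bc2, bs1, bs2, Real.cos_pi_div_six]
      ring
    push_cast at h1 h2 e1
    linarith
  have h := key (-A.arg)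
  have hA : A * Complex.exp (-(↑A.arg : ℂ) * Complex.I) = (‖A‖ : ℂ) := by
    nth_rewrite 1 [← Complex.norm_mul_exp_arg_mul_I A]
    rw [mul_assoc, ← Complex.exp_add]
    rw [show (↑A.arg : ℂ) * Complex.I + -↑A.arg * Complex.I = 0 by ring]
    simp
  push_cast at h
  rw [hA] at h
  simp at h
  have h3 : (0 : ℝ) < Real.sqrt 3 := Real.sqrt_pos.mpr (by norm_num)
  rw [le_div_iff₀ h3]
  linarith
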